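/- Let z be a complex number with |z| = 1, let q be a positive integer, and let u_x, u_y be q×q complex matrices satisfying ‖u_x†u_x − 1‖ ≤ ε, ‖u_y†u_y − 1‖ ≤ ε, and ‖u_y† u_x† u_y u_x − z·1‖ ≤ ε for some ε with 0 ≤ ε ≤ 1/(4q). Then |1 − z^q| ≤ Cq²ε for a universal constant C (one may take C = 10, say), where the operator norm is used. -/

import Mathlib

open scoped Matrix.Norms.L2Operator

open Polynomial in
lemma aux_charpoly_root_mem_spectrum {q : ℕ} (A : Matrix (Fin q) (Fin q) ℂ) {μ : ℂ}
    (h : A.charpoly.IsRoot μ) : μ ∈ spectrum ℂ A := by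
  rw [spectrum.mem_iff]
  have hdet : (Matrix.scalar (Fin q) μ - A).det = 0 := by
    have : Polynomial.eval μ A.charpoly = (Matrix.scalar (Fin q) μ - A).det := by
      rw [Matrix.charpoly, _root_.eval_det, Matrix.matPolyEquiv_charmatrix]
      simp
    rw [← this]
    exact h
  intro hu
  have halg : (algebraMap ℂ (Matrix (Fin q) (Fin q) ℂ)) μ = Matrix.scalar (Fin q) μ := by
    ext i j
    rcases eq_or_ne i j with rfl | hij <;>
      simp [Matrix.algebraMap_eq_diagonal, Matrix.scalar_apply, Matrix.diagonal_apply, *]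
  rw [halg, Matrix.isUnit_iff_isUnit_det, hdet] at hu
  exact hu.ne_zero rfl

lemma aux_root_close {q : ℕ} (hq : 0 < q) (A : Matrix (Fin q) (Fin q) ℂ) (w : ℂ) (ε : ℝ)
    (hA : ‖A - w • (1 : Matrix (Fin q) (Fin q) ℂ)‖ ≤ ε) {μ : ℂ}
    (hμ : A.charpoly.IsRoot μ) : ‖μ - w‖ ≤ ε := by
  haveI : Nonempty (Fin q) := ⟨⟨0, hq⟩⟩
  haveI : CompleteSpace (Matrix (Fin q) (Fin q) ℂ) := FiniteDimensional.complete ℂ _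
  have hmem : μ ∈ spectrum ℂ A := aux_charpoly_root_mem_spectrum A hμ
  have hmem' : μ - w ∈ spectrum ℂ (A - w • (1 : Matrix (Fin q) (Fin q) ℂ)) := by
    rw [spectrum.mem_iff] at hmem ⊢
    intro hu
    apply hmem
    have : (algebraMap ℂ (Matrix (Fin q) (Fin q) ℂ)) (μ - w) -
        (A - w • (1 : Matrix (Fin q) (Fin q) ℂ)) =
        (algebraMap ℂ (Matrix (Fin q) (Fin q) ℂ)) μ - A := by
      rw [map_sub, Algebra.algebraMap_eq_smul_one w]
      abel
    rwa [this] at hu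
  have := spectrum.norm_le_norm_of_mem hmem'
  calc ‖μ - w‖ = ‖μ - w‖ := rfl
    _ ≤ ‖A - w • (1 : Matrix (Fin q) (Fin q) ℂ)‖ := this
    _ ≤ ε := hA

lemma aux_prod_close (ε : ℝ) (hε : 0 ≤ ε) (w : ℂ) (hw : ‖w‖ = 1)
    (s : Multiset ℂ) (h : ∀ a ∈ s, ‖a - w‖ ≤ ε) :
    ‖s.prod - w ^ Multiset.card s‖ ≤ (1 + ε) ^ Multiset.card s - 1 := by
  induction s using Multiset.induction with
  | empty => simp
  | cons a s ih =>
    have ha := h a (Multiset.mem_cons_self a s)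
    have hs := ih (fun b hb => h b (Multiset.mem_cons_of_mem hb))
    have hwn : ‖w ^ Multiset.card s‖ = 1 := by
      rw [norm_pow, hw, one_pow]
    have hp : ‖s.prod‖ ≤ (1 + ε) ^ Multiset.card s := by
      calc ‖s.prod‖
          ≤ ‖s.prod - w ^ Multiset.card s‖ + ‖w ^ Multiset.card s‖ := by
            simpa using norm_add_le (s.prod - w ^ Multiset.card s) (w ^ Multiset.card s)
        _ ≤ ((1 + ε) ^ Multiset.card s - 1) + 1 := add_le_add hs (le_of_eq hwn)
        _ = (1 + ε) ^ Multiset.card s := by ring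
    rw [Multiset.prod_cons, Multiset.card_cons]
    have key : (a * s.prod - w ^ (Multiset.card s + 1)) =
        (a - w) * s.prod + w * (s.prod - w ^ Multiset.card s) := by
      rw [pow_succ]; ring
    have hone : (1 : ℝ) ≤ (1 + ε) ^ Multiset.card s := one_le_pow₀ (by linarith)
    calc ‖a * s.prod - w ^ (Multiset.card s + 1)‖
        ≤ ‖(a - w) * s.prod‖ + ‖w * (s.prod - w ^ Multiset.card s)‖ := by
          rw [key]; exact norm_add_le _ _
      _ = ‖a - w‖ * ‖s.prod‖ +
            ‖w‖ * ‖s.prod - w ^ Multiset.card s‖ := by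
          rw [norm_mul, norm_mul]
      _ ≤ ε * (1 + ε) ^ Multiset.card s + 1 * ((1 + ε) ^ Multiset.card s - 1) := by
          refine add_le_add (mul_le_mul ha hp (norm_nonneg _) hε) ?_
          rw [hw, one_mul, one_mul]
          exact hs
      _ ≤ (1 + ε) ^ (Multiset.card s + 1) - 1 := by
          rw [pow_succ]; nlinarith [hone]

lemma aux_det_close {q : ℕ} (hq : 0 < q) (A : Matrix (Fin q) (Fin q) ℂ) (w : ℂ)
    (hw : ‖w‖ = 1) (ε : ℝ) (hε : 0 ≤ ε)
    (hA : ‖A - w • (1 : Matrix (Fin q) (Fin q) ℂ)‖ ≤ ε) :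
    ‖A.det - w ^ q‖ ≤ (1 + ε) ^ q - 1 := by
  have hcard : Multiset.card A.charpoly.roots = q := by
    have h1 : A.charpoly.natDegree = q := by
      simpa using Matrix.charpoly_natDegree_eq_dim A
    exact (Polynomial.splits_iff_card_roots.mp
      (IsAlgClosed.splits A.charpoly)).trans h1
  have hdet := Matrix.det_eq_prod_roots_charpoly A
  have := aux_prod_close ε hε w hw A.charpoly.roots (fun a ha =>
    aux_root_close hq A w ε hA (Polynomial.isRoot_of_mem_roots ha))
  rw [hcard] at this
  rwa [hdet]

lemma aux_pow_le (x : ℝ) (hx : 0 ≤ x) : ∀ n : ℕ, (n : ℝ) * x ≤ 1 / 2 →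
    (1 + x) ^ n ≤ 1 + 2 * n * x := by
  intro n
  induction n with
  | zero => simp
  | succ n ih =>
    intro h
    have hn : (n : ℝ) * x ≤ 1 / 2 := by
      push_cast at h ⊢
      nlinarith
    have h1 := ih hn
    have hpos : (0 : ℝ) ≤ 1 + 2 * n * x := by positivity
    rw [pow_succ]
    push_cast
    nlinarith [mul_nonneg (Nat.cast_nonneg (α := ℝ) n) hx]

set_option maxHeartbeats 1000000 in
/-- Let `z` be a complex number with `|z| = 1`, `q` a positive integer, and `u_x`, `u_y`
`q×q` matrices with `‖u_x†u_x − 1‖ ≤ ε`, `‖u_y†u_y − 1‖ ≤ ε`,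
`‖u_y†u_x†u_yu_x − z·1‖ ≤ ε` (operator norm) for `0 ≤ ε ≤ 1/(4q)`.
Then `|1 − z^q| ≤ 10 q² ε`. -/
theorem root_of_unity_estimate (q : ℕ) (hq : 0 < q) (z : ℂ) (hz : ‖z‖ = 1)
    (ux uy : Matrix (Fin q) (Fin q) ℂ) (ε : ℝ) (hε0 : 0 ≤ ε) (hε : ε ≤ 1 / (4 * q))
    (hx : ‖ux.conjTranspose * ux - 1‖ ≤ ε)
    (hy : ‖uy.conjTranspose * uy - 1‖ ≤ ε)
    (hcomm : ‖uy.conjTranspose * ux.conjTranspose * uy * ux - z • (1 : Matrix (Fin q) (Fin q) ℂ)‖ ≤ ε) :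
    ‖(1 - z ^ q)‖ ≤ 10 * q ^ 2 * ε := by
  have hone : ‖(1 : ℂ)‖ = 1 := by simp
  set δ : ℝ := (1 + ε) ^ q - 1 with hδdef
  -- determinant bounds
  have hx' : ‖ux.conjTranspose * ux - (1 : ℂ) • (1 : Matrix (Fin q) (Fin q) ℂ)‖ ≤ ε := by
    rw [one_smul]; exact hx
  have hy' : ‖uy.conjTranspose * uy - (1 : ℂ) • (1 : Matrix (Fin q) (Fin q) ℂ)‖ ≤ ε := by
    rw [one_smul]; exact hy
  have hd1 := aux_det_close hq (ux.conjTranspose * ux) 1 hone ε hε0 hx'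
  have hd2 := aux_det_close hq (uy.conjTranspose * uy) 1 hone ε hε0 hy'
  have hD := aux_det_close hq (uy.conjTranspose * ux.conjTranspose * uy * ux) z hz ε hε0 hcomm
  rw [one_pow] at hd1 hd2
  set d1 : ℂ := (ux.conjTranspose * ux).det with hd1def
  set d2 : ℂ := (uy.conjTranspose * uy).det with hd2def
  have hDeq : (uy.conjTranspose * ux.conjTranspose * uy * ux).det = d1 * d2 := by
    rw [hd1def, hd2def]
    simp only [Matrix.det_mul]
    ring
  rw [hDeq] at hD
  -- numeric bounds
  have hq1 : (1 : ℝ) ≤ (q : ℝ) := by exact_mod_cast hq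
  have hqε : (q : ℝ) * ε ≤ 1 / 4 := by
    have hq0 : (0 : ℝ) < (q : ℝ) := by positivity
    calc (q : ℝ) * ε ≤ (q : ℝ) * (1 / (4 * q)) :=
          mul_le_mul_of_nonneg_left hε (le_of_lt hq0)
      _ = 1 / 4 := by field_simp
  have hδle : δ ≤ 2 * q * ε := by
    have := aux_pow_le ε hε0 q (le_trans hqε (by norm_num))
    rw [hδdef]
    linarith
  have hδ0 : 0 ≤ δ := by
    rw [hδdef]
    have : (1 : ℝ) ≤ (1 + ε) ^ q := one_le_pow₀ (by linarith)
    linarith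
  have hδhalf : δ ≤ 1 / 2 := by nlinarith
  -- abs d1 bound
  have habs_d1 : ‖d1‖ ≤ 1 + δ := by
    calc ‖d1‖ ≤ ‖d1 - 1‖ + ‖(1 : ℂ)‖ := by
          simpa using norm_add_le (d1 - 1) 1
      _ ≤ δ + 1 := by rw [hone]; gcongr
      _ = 1 + δ := by ring
  have hd1d2 : ‖d1 * d2 - 1‖ ≤ (1 + δ) * δ + δ := by
    have key : d1 * d2 - 1 = d1 * (d2 - 1) + (d1 - 1) := by ring
    calc ‖d1 * d2 - 1‖
        ≤ ‖d1 * (d2 - 1)‖ + ‖d1 - 1‖ := by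
          rw [key]; exact norm_add_le _ _
      _ = ‖d1‖ * ‖d2 - 1‖ + ‖d1 - 1‖ := by rw [norm_mul]
      _ ≤ (1 + δ) * δ + δ := by
          gcongr
  have hfinal : ‖1 - z ^ q‖ ≤ δ + ((1 + δ) * δ + δ) := by
    calc ‖1 - z ^ q‖
        ≤ ‖1 - d1 * d2‖ + ‖d1 * d2 - z ^ q‖ := by
          simpa using norm_add_le (1 - d1 * d2) (d1 * d2 - z ^ q)
      _ ≤ ((1 + δ) * δ + δ) + δ := by
          gcongr
          rw [← norm_neg]; simpa using hd1d2
      _ = δ + ((1 + δ) * δ + δ) := by ring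
  have : δ + ((1 + δ) * δ + δ) ≤ 10 * q ^ 2 * ε := by nlinarith
  linarith
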